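/- For each k ∈ ℕ, the function x ↦ √(1-x²) P_k^{(α+1,β+1)}(x) is an eigenfunction of the modified Jacobi operator M^{(α,β)} = J^{(α,β)} + (α+1/2)/(1-x) + (β+1/2)/(1+x) with eigenvalue λ_{k+1} = (k+1)(k + α + β + 2). -/

import Mathlib

noncomputable def jacobiP (α β : ℝ) (k : ℕ) (x : ℝ) : ℝ :=
  ((-1 : ℝ) ^ k / (2 ^ k * (Nat.factorial k : ℝ))) * (1 - x) ^ (-α) * (1 + x) ^ (-β) *
    iteratedDeriv k (fun y => (1 - y) ^ (α + (k : ℝ)) * (1 + y) ^ (β + (k : ℝ))) x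


theorem contDiffAt_top_deriv {f : ℝ → ℝ} {x : ℝ} (h : ContDiffAt ℝ (⊤ : ℕ∞) f x) :
    ContDiffAt ℝ (⊤ : ℕ∞) (deriv f) x := by
  have h1 : ContDiffAt ℝ (⊤ : ℕ∞) (fderiv ℝ f) x := h.fderiv_right (by simp)
  have h2 : deriv f = fun y => fderiv ℝ f y 1 := funext fun y => (fderiv_apply_one_eq_deriv).symm
  rw [h2]
  exact h1.clm_apply contDiffAt_const

theorem contDiffAt_top_iteratedDeriv {f : ℝ → ℝ} {x : ℝ} (h : ContDiffAt ℝ (⊤ : ℕ∞) f x) (n : ℕ) :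
    ContDiffAt ℝ (⊤ : ℕ∞) (iteratedDeriv n f) x := by
  induction n with
  | zero => simpa [iteratedDeriv_zero] using h
  | succ n ih => rw [iteratedDeriv_succ]; exact contDiffAt_top_deriv ih

theorem hasDerivAt_iteratedDeriv {f : ℝ → ℝ} {x : ℝ} (h : ContDiffAt ℝ (⊤ : ℕ∞) f x) (n : ℕ) :
    HasDerivAt (iteratedDeriv n f) (iteratedDeriv (n + 1) f x) x := by
  rw [iteratedDeriv_succ]
  exact (((contDiffAt_top_iteratedDeriv h n)).differentiableAt (by simp)).hasDerivAt

theorem deriv_ident_step (u : ℝ → ℝ)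
    (hu : ∀ y ∈ Set.Ioo (-1:ℝ) 1, ContDiffAt ℝ (⊤:ℕ∞) u y) (m j : ℕ) (p q r : ℝ)
    (h : ∀ y ∈ Set.Ioo (-1:ℝ) 1, (1-y^2) * iteratedDeriv (m+1) u y
        + (p*y+q) * iteratedDeriv m u y + r * iteratedDeriv j u y = 0) :
    ∀ y ∈ Set.Ioo (-1:ℝ) 1, (1-y^2) * iteratedDeriv (m+2) u y
        + ((p-2)*y+q) * iteratedDeriv (m+1) u y + p * iteratedDeriv m u y
        + r * iteratedDeriv (j+1) u y = 0 := by
  intro y hy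
  have h1 : HasDerivAt (fun z : ℝ => 1 - z^2) (-(2*y)) y := by
    simpa using ((hasDerivAt_pow 2 y).const_sub 1)
  have h2 : HasDerivAt (fun z : ℝ => p*z+q) p y := by
    simpa using (((hasDerivAt_id y).const_mul p).add_const q)
  have hΦ : HasDerivAt
      (fun z => (1-z^2) * iteratedDeriv (m+1) u z + (p*z+q) * iteratedDeriv m u z
        + r * iteratedDeriv j u z)
      ((-(2*y) * iteratedDeriv (m+1) u y + (1-y^2) * iteratedDeriv (m+2) u y)
        + (p * iteratedDeriv m u y + (p*y+q) * iteratedDeriv (m+1) u y)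
        + r * iteratedDeriv (j+1) u y) y :=
    ((h1.mul (hasDerivAt_iteratedDeriv (hu y hy) (m+1))).add
      (h2.mul (hasDerivAt_iteratedDeriv (hu y hy) m))).add
      ((hasDerivAt_iteratedDeriv (hu y hy) j).const_mul r)
  have hz : deriv (fun z => (1-z^2) * iteratedDeriv (m+1) u z + (p*z+q) * iteratedDeriv m u z
      + r * iteratedDeriv j u z) y = 0 := by
    have hev : (fun z => (1-z^2) * iteratedDeriv (m+1) u z + (p*z+q) * iteratedDeriv m u z
        + r * iteratedDeriv j u z) =ᶠ[nhds y] (fun _ => (0:ℝ)) := by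
      filter_upwards [isOpen_Ioo.mem_nhds hy] with z hz using h z hz
    rw [hev.deriv_eq, deriv_const]
  have := hΦ.deriv
  rw [hz] at this
  linarith [this]


theorem u_contDiffAt (a b : ℝ) :
    ∀ y ∈ Set.Ioo (-1:ℝ) 1,
      ContDiffAt ℝ (⊤:ℕ∞) (fun y : ℝ => (1 - y) ^ a * (1 + y) ^ b) y := by
  intro y hy
  have h1 : (0:ℝ) < 1 - y := by linarith [hy.2]
  have h2 : (0:ℝ) < 1 + y := by linarith [hy.1]
  exact ((contDiffAt_const.sub contDiffAt_id).rpow_const_of_ne (by simpa using h1.ne')).mul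
    ((contDiffAt_const.add contDiffAt_id).rpow_const_of_ne (by simpa using h2.ne'))

theorem u_first_order (a b : ℝ) :
    ∀ y ∈ Set.Ioo (-1:ℝ) 1,
      (1-y^2) * iteratedDeriv 1 (fun y : ℝ => (1 - y) ^ a * (1 + y) ^ b) y
        + ((a+b)*y + (a-b)) * iteratedDeriv 0 (fun y : ℝ => (1 - y) ^ a * (1 + y) ^ b) y
        + (0:ℝ) * iteratedDeriv 0 (fun y : ℝ => (1 - y) ^ a * (1 + y) ^ b) y = 0 := by
  intro y hy
  have h1 : (0:ℝ) < 1 - y := by linarith [hy.2]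
  have h2 : (0:ℝ) < 1 + y := by linarith [hy.1]
  have hd1 : HasDerivAt (fun z : ℝ => (1 - z) ^ a) (-1 * a * (1-y)^(a-1)) y :=
    (((hasDerivAt_id y).const_sub 1)).rpow_const (Or.inl h1.ne')
  have hd2 : HasDerivAt (fun z : ℝ => (1 + z) ^ b) (1 * b * (1+y)^(b-1)) y :=
    (((hasDerivAt_id y).const_add 1)).rpow_const (Or.inl h2.ne')
  have hd : HasDerivAt (fun y : ℝ => (1 - y) ^ a * (1 + y) ^ b)
      ((-1 * a * (1-y)^(a-1)) * (1+y)^b + (1-y)^a * (1 * b * (1+y)^(b-1))) y := hd1.mul hd2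
  rw [iteratedDeriv_one, iteratedDeriv_zero, hd.deriv]
  rw [Real.rpow_sub_one h1.ne', Real.rpow_sub_one h2.ne']
  field_simp
  ring

theorem rodrigues_ode (a b : ℝ) (n : ℕ) :
    ∀ y ∈ Set.Ioo (-1:ℝ) 1,
      (1-y^2) * iteratedDeriv (n+2) (fun y : ℝ => (1 - y) ^ a * (1 + y) ^ b) y
        + ((a+b-2*((n:ℝ)+1))*y + (a-b)) * iteratedDeriv (n+1) (fun y : ℝ => (1 - y) ^ a * (1 + y) ^ b) y
        + (((n:ℝ)+1)*(a+b-(n:ℝ))) * iteratedDeriv n (fun y : ℝ => (1 - y) ^ a * (1 + y) ^ b) y = 0 := by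
  induction n with
  | zero =>
    intro y hy
    have := deriv_ident_step _ (u_contDiffAt a b) 0 0 (a+b) (a-b) 0 (u_first_order a b) y hy
    push_cast
    linear_combination this
  | succ n ih =>
    intro y hy
    have := deriv_ident_step _ (u_contDiffAt a b) (n+1) n (a+b-2*((n:ℝ)+1)) (a-b)
      (((n:ℝ)+1)*(a+b-(n:ℝ))) ih y hy
    push_cast
    linear_combination this

theorem deriv_formula (pp qq c v v' y : ℝ) (h1 : (1:ℝ) - y ≠ 0) (h2 : (1:ℝ) + y ≠ 0) :
    c * (-1 * pp * (1-y)^(pp-1) * ((1+y)^qq * v)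
      + (1-y)^pp * (1 * qq * (1+y)^(qq-1) * v + (1+y)^qq * v'))
    = c * ((1-y)^pp * ((1+y)^qq * (v' + (-pp/(1-y) + qq/(1+y)) * v))) := by
  rw [Real.rpow_sub_one h1, Real.rpow_sub_one h2]
  congr 1
  generalize (1-y)^pp = A
  generalize (1+y)^qq = B
  field_simp
  ring

set_option maxHeartbeats 1600000 in
theorem modified_jacobi_eigenfunction (α β : ℝ) (hα : -1 < α) (hβ : -1 < β) (k : ℕ)
    (x : ℝ) (hx : x ∈ Set.Ioo (-1 : ℝ) 1) :
    (-(1 - x ^ 2) * deriv (deriv (fun y => Real.sqrt (1 - y ^ 2) * jacobiP (α + 1) (β + 1) k y)) x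
      - (β - α - (α + β + 2) * x) *
          deriv (fun y => Real.sqrt (1 - y ^ 2) * jacobiP (α + 1) (β + 1) k y) x)
      + ((α + 1 / 2) / (1 - x) + (β + 1 / 2) / (1 + x)) *
          (Real.sqrt (1 - x ^ 2) * jacobiP (α + 1) (β + 1) k x) =
      ((k : ℝ) + 1) * ((k : ℝ) + α + β + 2) * (Real.sqrt (1 - x ^ 2) * jacobiP (α + 1) (β + 1) k x) := by
  obtain ⟨hxl, hxr⟩ := hx
  have hx1 : (0:ℝ) < 1 - x := by linarith
  have hx2 : (0:ℝ) < 1 + x := by linarith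
  have hxmem : x ∈ Set.Ioo (-1:ℝ) 1 := ⟨hxl, hxr⟩
  obtain ⟨u, hu⟩ : ∃ u : ℝ → ℝ,
      u = fun y : ℝ => (1 - y) ^ (α + 1 + (k:ℝ)) * (1 + y) ^ (β + 1 + (k:ℝ)) := ⟨_, rfl⟩
  obtain ⟨pp, hpp⟩ : ∃ pp : ℝ, pp = -α - 1/2 := ⟨_, rfl⟩
  obtain ⟨qq, hqq⟩ : ∃ qq : ℝ, qq = -β - 1/2 := ⟨_, rfl⟩
  obtain ⟨c, hc⟩ : ∃ c : ℝ, c = (-1:ℝ)^k / (2^k * (Nat.factorial k : ℝ)) := ⟨_, rfl⟩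
  have hsm : ∀ y ∈ Set.Ioo (-1:ℝ) 1, ContDiffAt ℝ (⊤:ℕ∞) u y := by
    rw [hu]; exact u_contDiffAt _ _
  have hDD : ∀ (n : ℕ), ∀ y ∈ Set.Ioo (-1:ℝ) 1,
      HasDerivAt (iteratedDeriv n u) (iteratedDeriv (n+1) u y) y :=
    fun n y hy => hasDerivAt_iteratedDeriv (hsm y hy) n
  have key := rodrigues_ode (α+1+(k:ℝ)) (β+1+(k:ℝ)) k x hxmem
  rw [← hu] at key
  obtain ⟨G, hG⟩ : ∃ G : ℝ → ℝ,
      G = fun y => c * ((1-y)^pp * ((1+y)^qq * iteratedDeriv k u y)) := ⟨_, rfl⟩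
  obtain ⟨G1, hG1⟩ : ∃ G1 : ℝ → ℝ, G1 = fun y => c * ((1-y)^pp * ((1+y)^qq *
      (iteratedDeriv (k+1) u y + (-pp/(1-y) + qq/(1+y)) * iteratedDeriv k u y))) := ⟨_, rfl⟩
  have hEq : ∀ y ∈ Set.Ioo (-1:ℝ) 1, Real.sqrt (1 - y^2) * jacobiP (α+1) (β+1) k y = G y := by
    intro y hy
    have h1 : (0:ℝ) < 1 - y := by linarith [hy.2]
    have h2 : (0:ℝ) < 1 + y := by linarith [hy.1]
    have hs : Real.sqrt (1-y^2) = (1-y)^((1:ℝ)/2) * (1+y)^((1:ℝ)/2) := by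
      rw [show (1:ℝ)-y^2 = (1-y)*(1+y) by ring, Real.sqrt_mul h1.le,
        Real.sqrt_eq_rpow, Real.sqrt_eq_rpow]
    have e1 : (1-y)^((1:ℝ)/2) * (1-y)^(-(α+1)) = (1-y)^pp := by
      rw [← Real.rpow_add h1, hpp, show (1:ℝ)/2 + -(α+1) = -α - 1/2 by ring]
    have e2 : (1+y)^((1:ℝ)/2) * (1+y)^(-(β+1)) = (1+y)^qq := by
      rw [← Real.rpow_add h2, hqq, show (1:ℝ)/2 + -(β+1) = -β - 1/2 by ring]
    simp only [jacobiP]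
    rw [← hu, ← hc, hs, hG]
    calc (1-y)^((1:ℝ)/2) * (1+y)^((1:ℝ)/2) *
          (c * (1 - y) ^ (-(α+1)) * (1 + y) ^ (-(β+1)) * iteratedDeriv k u y)
        = c * (((1-y)^((1:ℝ)/2) * (1-y)^(-(α+1))) *
            (((1+y)^((1:ℝ)/2) * (1+y)^(-(β+1))) * iteratedDeriv k u y)) := by ring
      _ = c * ((1-y)^pp * ((1+y)^qq * iteratedDeriv k u y)) := by rw [e1, e2]
  have hEv : (fun y => Real.sqrt (1 - y^2) * jacobiP (α+1) (β+1) k y) =ᶠ[nhds x] G := by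
    filter_upwards [isOpen_Ioo.mem_nhds hxmem] with z hz using hEq z hz
  have hGd : ∀ y ∈ Set.Ioo (-1:ℝ) 1, HasDerivAt G (G1 y) y := by
    intro y hy
    have h1 : (0:ℝ) < 1 - y := by linarith [hy.2]
    have h2 : (0:ℝ) < 1 + y := by linarith [hy.1]
    have hE : HasDerivAt (fun z : ℝ => (1-z)^pp) (-1 * pp * (1-y)^(pp-1)) y :=
      ((hasDerivAt_id y).const_sub 1).rpow_const (Or.inl h1.ne')
    have hF : HasDerivAt (fun z : ℝ => (1+z)^qq) (1 * qq * (1+y)^(qq-1)) y :=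
      ((hasDerivAt_id y).const_add 1).rpow_const (Or.inl h2.ne')
    rw [hG, hG1]
    have h := (hE.mul (hF.mul (hDD k y hy))).const_mul c
    convert h using 1 <;> try rfl
    exact (deriv_formula pp qq c (iteratedDeriv k u y) (iteratedDeriv (k+1) u y) y
      h1.ne' h2.ne').symm
  have hd1 : deriv (fun y => Real.sqrt (1 - y^2) * jacobiP (α+1) (β+1) k y) x = G1 x := by
    rw [hEv.deriv_eq, (hGd x hxmem).deriv]
  have hEv2 : deriv (fun y => Real.sqrt (1 - y^2) * jacobiP (α+1) (β+1) k y) =ᶠ[nhds x] G1 := by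
    refine hEv.deriv.trans ?_
    filter_upwards [isOpen_Ioo.mem_nhds hxmem] with z hz using (hGd z hz).deriv
  have hR : HasDerivAt (fun z : ℝ => -pp/(1-z) + qq/(1+z))
      (-pp/(1-x)^2 - qq/(1+x)^2) x := by
    have hA : HasDerivAt (fun z : ℝ => 1 - z) (-1) x := (hasDerivAt_id x).const_sub 1
    have hB : HasDerivAt (fun z : ℝ => 1 + z) (1) x := (hasDerivAt_id x).const_add 1
    have hA' := (hasDerivAt_const x (-pp)).div hA hx1.ne'
    have hB' := (hasDerivAt_const x qq).div hB hx2.ne'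
    convert hA'.add hB' using 1 <;> try rfl
    field_simp
    ring
  have hG1d : HasDerivAt G1 (c * ((1-x)^pp * ((1+x)^qq *
      ((iteratedDeriv (k+2) u x + ((-pp/(1-x)^2 - qq/(1+x)^2) * iteratedDeriv k u x
          + (-pp/(1-x) + qq/(1+x)) * iteratedDeriv (k+1) u x))
        + (-pp/(1-x) + qq/(1+x)) * (iteratedDeriv (k+1) u x
          + (-pp/(1-x) + qq/(1+x)) * iteratedDeriv k u x))))) x := by
    have hE : HasDerivAt (fun z : ℝ => (1-z)^pp) (-1 * pp * (1-x)^(pp-1)) x :=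
      ((hasDerivAt_id x).const_sub 1).rpow_const (Or.inl hx1.ne')
    have hF : HasDerivAt (fun z : ℝ => (1+z)^qq) (1 * qq * (1+x)^(qq-1)) x :=
      ((hasDerivAt_id x).const_add 1).rpow_const (Or.inl hx2.ne')
    have hW : HasDerivAt (fun z => iteratedDeriv (k+1) u z
        + (-pp/(1-z) + qq/(1+z)) * iteratedDeriv k u z)
        (iteratedDeriv (k+2) u x + ((-pp/(1-x)^2 - qq/(1+x)^2) * iteratedDeriv k u x
          + (-pp/(1-x) + qq/(1+x)) * iteratedDeriv (k+1) u x)) x :=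
      (hDD (k+1) x hxmem).add (hR.mul (hDD k x hxmem))
    rw [hG1]
    have h := (hE.mul (hF.mul hW)).const_mul c
    convert h using 1 <;> try rfl
    exact (deriv_formula pp qq c
      (iteratedDeriv (k+1) u x + (-pp/(1-x) + qq/(1+x)) * iteratedDeriv k u x)
      (iteratedDeriv (k+2) u x + ((-pp/(1-x)^2 - qq/(1+x)^2) * iteratedDeriv k u x
        + (-pp/(1-x) + qq/(1+x)) * iteratedDeriv (k+1) u x)) x hx1.ne' hx2.ne').symm
  have hd2 : deriv (deriv (fun y => Real.sqrt (1 - y^2) * jacobiP (α+1) (β+1) k y)) x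
      = c * ((1-x)^pp * ((1+x)^qq *
      ((iteratedDeriv (k+2) u x + ((-pp/(1-x)^2 - qq/(1+x)^2) * iteratedDeriv k u x
          + (-pp/(1-x) + qq/(1+x)) * iteratedDeriv (k+1) u x))
        + (-pp/(1-x) + qq/(1+x)) * (iteratedDeriv (k+1) u x
          + (-pp/(1-x) + qq/(1+x)) * iteratedDeriv k u x)))) := by
    rw [hEv2.deriv_eq, hG1d.deriv]
  rw [hd2, hd1, hEq x hxmem]
  simp only [hG, hG1]
  generalize hV2 : iteratedDeriv (k+2) u x = V2 at key ⊢
  generalize hV1 : iteratedDeriv (k+1) u x = V1 at key ⊢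
  generalize hV0 : iteratedDeriv k u x = V0 at key ⊢
  generalize hA : (1-x)^pp = A
  generalize hB : (1+x)^qq = B
  rw [hpp, hqq]
  have hx12 : ((1:ℝ)-x)*(1+x) ≠ 0 := mul_ne_zero hx1.ne' hx2.ne'
  have hV2e : V2 = (-(((α+1+(k:ℝ)+(β+1+(k:ℝ))-2*((k:ℝ)+1))*x + (α+1+(k:ℝ)-(β+1+(k:ℝ))))*V1)
      - ((k:ℝ)+1)*(α+1+(k:ℝ)+(β+1+(k:ℝ))-(k:ℝ))*V0)/((1-x)*(1+x)) := by
    rw [eq_div_iff hx12]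
    linear_combination key
  rw [hV2e]
  field_simp [hx1.ne', hx2.ne']
  ring
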